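/- Let p ≥ 1 be an integer, H > 0 and β ∈ [0, 1/p]. Let x_k, υ_k, x_{k+1} ∈ E, set u_k = υ_k − x_k, and let ḡ be a subgradient of ψ at x_{k+1} with (x_{k+1}, ḡ) ∈ A(υ_k, β) and ⟨∇f(x_{k+1}) + ḡ, u_k⟩ ≤ 0. Define 𝓛_k(x) = f(x_{k+1}) + ⟨∇f(x_{k+1}), x − x_{k+1}⟩ + ψ(x). Then F(x_k) ≥ 𝓛_k(x_k) ≥ F(x_{k+1}) + ((1−β)/H)^{1/p} ‖∇f(x_{k+1}) + ḡ‖^{(p+1)/p}. -/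

import Mathlib

open scoped RealInnerProductSpace

variable {E : Type*} [NormedAddCommGroup E] [InnerProductSpace ℝ E] [FiniteDimensional ℝ E]

/-- `g` is a subgradient of `ψ` at `T`. -/
def IsSubgrad (ψ : E → ℝ) (T g : E) : Prop := ∀ y, ψ T + ⟪g, y - T⟫ ≤ ψ y

/-- `(T, g)` is an acceptable solution of the `p`-th order proximal-point problem at `xbar`,
i.e. `(T, g) ∈ A(xbar, β)`. -/
def InA (f' : E → E) (ψ : E → ℝ) (p : ℕ) (H β : ℝ) (xbar T g : E) : Prop :=
  IsSubgrad ψ T g ∧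
    ‖f' T + g + (H * ‖T - xbar‖ ^ (p - 1)) • (T - xbar)‖ ≤ β * ‖f' T + g‖

/-- Gradient inequality for convex differentiable functions. -/
lemma convex_grad_ineq {f : E → ℝ} (hf : ConvexOn ℝ Set.univ f) {x g : E}
    (hg : HasGradientAt f g x) (y : E) : f x + ⟪g, y - x⟫ ≤ f y := by
  set φ : ℝ → ℝ := fun t => f (t • (y - x) + x) with hφ
  have hconv : ConvexOn ℝ Set.univ φ := by
    have h := hf.comp_affineMap (AffineMap.lineMap x y : ℝ →ᵃ[ℝ] E)
    have heq : (f ∘ (AffineMap.lineMap x y : ℝ →ᵃ[ℝ] E)) = φ := by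
      funext t
      simp [φ, AffineMap.lineMap_apply, Function.comp]
    rw [heq] at h
    simpa using h
  have hc : HasDerivAt (fun t : ℝ => t • (y - x) + x) (y - x) 0 := by
    simpa using ((hasDerivAt_id (0 : ℝ)).smul_const (y - x)).add_const x
  have hD : HasDerivAt φ ⟪g, y - x⟫ 0 := by
    have h1 : HasFDerivAt f (InnerProductSpace.toDual ℝ E g) ((0 : ℝ) • (y - x) + x) := by
      simpa using hg.hasFDerivAt
    have h3 := h1.comp_hasDerivAt 0 hc
    simpa [InnerProductSpace.toDual_apply_apply, Function.comp_def, hφ] using h3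
  have hs := hconv.le_slope_of_hasDerivAt (Set.mem_univ (0 : ℝ)) (Set.mem_univ 1)
    zero_lt_one hD
  rw [slope_def_field] at hs
  have h0 : φ 0 = f x := by simp [φ]
  have h1 : φ 1 = f y := by simp [φ]
  rw [h0, h1] at hs
  have : ⟪g, y - x⟫ ≤ f y - f x := by simpa using hs
  linarith

/-- The scalar computation at the heart of the estimate. -/
lemma key_scalar (p : ℕ) (hp : 1 ≤ p) {H β a b t v : ℝ} (hH : 0 < H)
    (hβ0 : 0 ≤ β) (hβ1 : β ≤ 1 / (p : ℝ)) (ha : 0 ≤ a) (hb0 : 0 ≤ b) (hb : b ≤ β * a)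
    (ht : 0 ≤ t) (hlb : a - b ≤ H * t ^ p)
    (hv : 2 * (H * t ^ (p - 1)) * v = a ^ 2 - b ^ 2 + (H * t ^ p) ^ 2)
    (hv0 : 0 ≤ v) :
    ((1 - β) / H) ^ ((1 : ℝ) / p) * a ^ (((p : ℝ) + 1) / p) ≤ v := by
  have hP : (1 : ℝ) ≤ (p : ℝ) := by exact_mod_cast hp
  have hP0 : (0 : ℝ) < (p : ℝ) := by linarith
  set P := (p : ℝ) with hPdef
  have hβle1 : β ≤ 1 := hβ1.trans (by rw [div_le_one hP0]; exact hP)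
  by_cases ha0 : a = 0
  · rw [ha0, Real.zero_rpow (by positivity : ((P + 1) / P) ≠ 0), mul_zero]
    exact hv0
  rcases eq_or_lt_of_le hβle1 with hβeq | hβlt
  · rw [hβeq, sub_self, zero_div, Real.zero_rpow (by positivity : ((1 : ℝ) / P) ≠ 0),
      zero_mul]
    exact hv0
  · have ha' : 0 < a := lt_of_le_of_ne ha (Ne.symm ha0)
    have hab : 0 < a - b := by nlinarith
    have hu0 : 0 < H * t ^ p := lt_of_lt_of_le hab hlb
    have ht0 : 0 < t := by
      rcases eq_or_lt_of_le ht with h | h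
      · exfalso; rw [← h, zero_pow (by omega : p ≠ 0), mul_zero] at hu0
        exact lt_irrefl _ hu0
      · exact h
    set u := H * t ^ p with hu
    set c := H * t ^ (p - 1) with hc
    have hc0 : 0 < c := by positivity
    have hbP : P * b ≤ a := by
      have h1 : b ≤ 1 / P * a := hb.trans (mul_le_mul_of_nonneg_right hβ1 ha)
      have h2 := mul_le_mul_of_nonneg_left h1 hP0.le
      calc P * b ≤ P * (1 / P * a) := h2
        _ = a := by field_simp
    have hu0' : 0 < u := hu0
    -- Step A: polynomial inequality
    have hA : 2 * a * ((P - 1) * u + (a - b)) ≤ P * (a ^ 2 - b ^ 2 + u ^ 2) := by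
      have h1 : 0 ≤ u - (a - b) := by linarith
      have h2 : 0 ≤ P * (u + (a - b)) - 2 * a * (P - 1) := by
        nlinarith [mul_le_mul_of_nonneg_left (show a - b ≤ u by linarith) hP0.le]
      nlinarith [mul_nonneg h1 h2]
    -- Step B: weighted AM-GM
    have hB : u ^ ((P - 1) / P) * (a - b) ^ ((1 : ℝ) / P) ≤
        (P - 1) / P * u + 1 / P * (a - b) :=
      Real.geom_mean_le_arith_mean2_weighted (div_nonneg (by linarith) hP0.le)
        (by positivity) hu0'.le hab.le (by field_simp; ring)
    have hB' : P * (u ^ ((P - 1) / P) * (a - b) ^ ((1 : ℝ) / P)) ≤ (P - 1) * u + (a - b) := by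
      have h3 := mul_le_mul_of_nonneg_left hB hP0.le
      have heq : P * ((P - 1) / P * u + 1 / P * (a - b)) = (P - 1) * u + (a - b) := by
        field_simp
      linarith [heq ▸ h3]
    -- Combine
    have hCombo : a * (u ^ ((P - 1) / P) * (a - b) ^ ((1 : ℝ) / P)) ≤ c * v := by
      have h5 := mul_le_mul_of_nonneg_left hB' (by positivity : (0 : ℝ) ≤ 2 * a)
      have h7 : P * (2 * c * v) = P * (a ^ 2 - b ^ 2 + u ^ 2) := by rw [hv]
      have h8 : (2 * P) * (a * (u ^ ((P - 1) / P) * (a - b) ^ ((1 : ℝ) / P))) ≤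
          (2 * P) * (c * v) := by
        calc (2 * P) * (a * (u ^ ((P - 1) / P) * (a - b) ^ ((1 : ℝ) / P)))
            = 2 * a * (P * (u ^ ((P - 1) / P) * (a - b) ^ ((1 : ℝ) / P))) := by ring
          _ ≤ 2 * a * ((P - 1) * u + (a - b)) := h5
          _ ≤ P * (a ^ 2 - b ^ 2 + u ^ 2) := hA
          _ = P * (2 * c * v) := h7.symm
          _ = (2 * P) * (c * v) := by ring
      exact le_of_mul_le_mul_left h8 (by positivity)
    -- Final comparison
    have hq : P * ((P - 1) / P) = P - 1 := by field_simp
    have h1β : (0 : ℝ) ≤ 1 - β := by linarith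
    have hC : ((1 - β) * a) ^ ((1 : ℝ) / P) ≤ (a - b) ^ ((1 : ℝ) / P) :=
      Real.rpow_le_rpow (by positivity) (by nlinarith) (by positivity)
    have hHid : H ^ ((P - 1) / P) * H ^ ((1 : ℝ) / P) = H := by
      rw [← Real.rpow_add hH, show (P - 1) / P + (1 : ℝ) / P = 1 by field_simp; ring,
        Real.rpow_one]
    have hE : c * (((1 - β) / H) ^ ((1 : ℝ) / P) * a ^ ((P + 1) / P)) =
        a * (u ^ ((P - 1) / P) * ((1 - β) * a) ^ ((1 : ℝ) / P)) := by
      have ht1 : t ^ (p - 1) = t ^ (P - 1) := by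
        rw [← Real.rpow_natCast t (p - 1), Nat.cast_sub hp, Nat.cast_one]
      have ht2 : t ^ p = t ^ P := by rw [← Real.rpow_natCast t p]
      have hane : a ^ ((P + 1) / P) = a * a ^ ((1 : ℝ) / P) := by
        rw [show (P + 1) / P = 1 + (1 : ℝ) / P by field_simp, Real.rpow_add ha',
          Real.rpow_one]
      rw [hc, hu, Real.div_rpow h1β hH.le, Real.mul_rpow h1β ha,
        Real.mul_rpow hH.le (by positivity : (0 : ℝ) ≤ t ^ p), ht1, ht2,
        ← Real.rpow_mul ht, hq, hane]
      have hne : H ^ ((1 : ℝ) / P) ≠ 0 := by positivity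
      field_simp
      linear_combination (-1 : ℝ) * hHid
    have hfin : c * (((1 - β) / H) ^ ((1 : ℝ) / P) * a ^ ((P + 1) / P)) ≤ c * v := by
      rw [hE]
      refine le_trans ?_ hCombo
      exact mul_le_mul_of_nonneg_left
        (mul_le_mul_of_nonneg_left hC (Real.rpow_nonneg hu0'.le _)) ha
    exact le_of_mul_le_mul_left hfin hc0

theorem stmt_10 (f ψ : E → ℝ) (f' : E → E)
    (hf : ConvexOn ℝ Set.univ f) (hψ : ConvexOn ℝ Set.univ ψ)
    (hf' : ∀ x, HasGradientAt f (f' x) x)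
    (p : ℕ) (hp : 1 ≤ p) (H β : ℝ) (hH : 0 < H)
    (hβ : β ∈ Set.Icc (0 : ℝ) (1 / (p : ℝ)))
    (xk vk xk1 gbar : E) (hA : InA f' ψ p H β vk xk1 gbar)
    (hinner : ⟪f' xk1 + gbar, vk - xk⟫ ≤ 0) :
    f xk + ψ xk ≥ f xk1 + ⟪f' xk1, xk - xk1⟫ + ψ xk ∧
      f xk1 + ⟪f' xk1, xk - xk1⟫ + ψ xk ≥
        f xk1 + ψ xk1 +
          ((1 - β) / H) ^ ((1 : ℝ) / p) * ‖f' xk1 + gbar‖ ^ (((p : ℝ) + 1) / p) := by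
  obtain ⟨hsub, hnorm⟩ := hA
  have hgrad := convex_grad_ineq hf (hf' xk1) xk
  constructor
  · linarith
  · set s := f' xk1 + gbar with hs
    set r := xk1 - vk with hr
    set c := H * ‖r‖ ^ (p - 1) with hcdef
    set w := s + c • r with hwdef
    have hc0 : 0 ≤ c := by positivity
    have hexp : ‖w‖ ^ 2 = ‖s‖ ^ 2 + 2 * (c * ⟪s, r⟫) + (c * ‖r‖) ^ 2 := by
      rw [hwdef, norm_add_sq_real, real_inner_smul_right, norm_smul, Real.norm_eq_abs,
        abs_of_nonneg hc0]
    have hct : c * ‖r‖ = H * ‖r‖ ^ p := by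
      rw [hcdef, mul_assoc, ← pow_succ, Nat.sub_add_cancel hp]
    have hv : 2 * (H * ‖r‖ ^ (p - 1)) * ⟪s, -r⟫ =
        ‖s‖ ^ 2 - ‖w‖ ^ 2 + (H * ‖r‖ ^ p) ^ 2 := by
      rw [inner_neg_right, ← hct, ← hcdef]
      nlinarith [hexp]
    have hlb : ‖s‖ - ‖w‖ ≤ H * ‖r‖ ^ p := by
      have h1 : ‖s‖ - ‖w‖ ≤ ‖s - w‖ := norm_sub_norm_le s w
      have h2 : s - w = -(c • r) := by rw [hwdef]; abel
      rw [h2, norm_neg, norm_smul, Real.norm_eq_abs, abs_of_nonneg hc0, hct] at h1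
      exact h1
    have hwle : ‖w‖ ≤ β * ‖s‖ := hnorm
    have hbs : ‖w‖ ≤ ‖s‖ := by
      have hβ1 : β ≤ 1 := by
        have hp1 : (1 : ℝ) ≤ (p : ℝ) := by exact_mod_cast hp
        have : 1 / (p : ℝ) ≤ 1 := by rw [div_le_one (by linarith)]; exact hp1
        linarith [hβ.2]
      nlinarith [hβ.1, norm_nonneg s, hwle]
    have hv0 : 0 ≤ ⟪s, -r⟫ := by
      by_cases hr0 : r = 0
      · simp [hr0]
      · have htpos : 0 < ‖r‖ := norm_pos_iff.mpr hr0
        have hcp : 0 < 2 * (H * ‖r‖ ^ (p - 1)) := by positivity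
        nlinarith [hv, sq_nonneg (H * ‖r‖ ^ p), norm_nonneg w, norm_nonneg s, hbs,
          mul_pos hcp (mul_pos hcp hcp)]
    have key := key_scalar p hp hH hβ.1 hβ.2 (norm_nonneg s) (norm_nonneg w) hwle
      (norm_nonneg r) hlb hv hv0
    have hψk := hsub xk
    have hsplitv : xk - vk + -(xk1 - vk) = xk - xk1 := by abel
    have hsplit : ⟪s, xk - xk1⟫ = ⟪s, xk - vk⟫ + ⟪s, -r⟫ := by
      rw [hr, ← hsplitv, inner_add_right]
    have hpos1 : 0 ≤ ⟪s, xk - vk⟫ := by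
      have hneg : xk - vk = -(vk - xk) := by abel
      rw [hneg, inner_neg_right]
      linarith
    have hsum : ⟪f' xk1, xk - xk1⟫ + ⟪gbar, xk - xk1⟫ = ⟪s, xk - xk1⟫ :=
      (inner_add_left _ _ _).symm
    linarith
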